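/- If D is a positive diagonal matrix and A is a symmetric matrix such that DAD is diagonally dominant (with nonnegative diagonal), then A is positive semidefinite. -/

import Mathlib

open Matrix

private lemma dd_psd {n : Type*} [Fintype n] [DecidableEq n] (B : Matrix n n ℝ)
    (hsymm : B.IsSymm)
    (hdd : ∀ i, ∑ j ∈ Finset.univ.erase i, |B i j| ≤ B i i)
    (x : n → ℝ) : 0 ≤ x ⬝ᵥ B.mulVec x := by
  classical
  have expand : x ⬝ᵥ B.mulVec x =
      ∑ i, (B i i * x i ^ 2 + ∑ j ∈ Finset.univ.erase i, x i * (B i j * x j)) := by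
    simp only [dotProduct, mulVec, dotProduct]
    refine Finset.sum_congr rfl fun i _ => ?_
    rw [Finset.mul_sum, ← Finset.add_sum_erase _ _ (Finset.mem_univ i)]
    ring_nf
  -- swap lemma
  have swap : ∑ i, ∑ j ∈ Finset.univ.erase i, |B i j| * x j ^ 2
      = ∑ i, ∑ j ∈ Finset.univ.erase i, |B i j| * x i ^ 2 := by
    have h1 : ∀ (f : n → n → ℝ), ∑ i, ∑ j ∈ Finset.univ.erase i, f i j
        = ∑ i, ∑ j, if j ≠ i then f i j else 0 := by
      intro f
      refine Finset.sum_congr rfl fun i _ => ?_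
      rw [← Finset.filter_ne' Finset.univ i, Finset.sum_filter]
    rw [h1, h1, Finset.sum_comm]
    refine Finset.sum_congr rfl fun i _ => Finset.sum_congr rfl fun j _ => ?_
    by_cases h : i = j
    · simp [h]
    · have hBij : B j i = B i j := hsymm.apply i j
      simp [h, Ne.symm h, hBij]
  have bound : ∀ i, -(∑ j ∈ Finset.univ.erase i,
      (|B i j| * x i ^ 2 + |B i j| * x j ^ 2) / 2)
      ≤ ∑ j ∈ Finset.univ.erase i, x i * (B i j * x j) := by
    intro i
    rw [← Finset.sum_neg_distrib]
    refine Finset.sum_le_sum fun j _ => ?_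
    have h1 : |x i * (B i j * x j)| ≤ (|B i j| * x i ^ 2 + |B i j| * x j ^ 2) / 2 := by
      have h2 : 2 * |x i| * |x j| ≤ |x i| ^ 2 + |x j| ^ 2 := two_mul_le_add_sq _ _
      have h3 : |x i * (B i j * x j)| = |B i j| * (|x i| * |x j|) := by
        rw [abs_mul, abs_mul]; ring
      have h4 : |x i| ^ 2 = x i ^ 2 := sq_abs _
      have h5 : |x j| ^ 2 = x j ^ 2 := sq_abs _
      rw [h3]
      nlinarith [abs_nonneg (B i j), abs_nonneg (x i), abs_nonneg (x j)]
    linarith [neg_abs_le (x i * (B i j * x j))]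
  rw [expand, Finset.sum_add_distrib]
  have main : -(∑ i, B i i * x i ^ 2)
      ≤ ∑ i, ∑ j ∈ Finset.univ.erase i, x i * (B i j * x j) := by
    have step1 : ∑ i, -(∑ j ∈ Finset.univ.erase i,
        (|B i j| * x i ^ 2 + |B i j| * x j ^ 2) / 2)
        ≤ ∑ i, ∑ j ∈ Finset.univ.erase i, x i * (B i j * x j) :=
      Finset.sum_le_sum fun i _ => bound i
    have step2 : ∑ i, ∑ j ∈ Finset.univ.erase i,
        (|B i j| * x i ^ 2 + |B i j| * x j ^ 2) / 2
        = ∑ i, ∑ j ∈ Finset.univ.erase i, |B i j| * x i ^ 2 := by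
      have : ∀ i, ∑ j ∈ Finset.univ.erase i,
          (|B i j| * x i ^ 2 + |B i j| * x j ^ 2) / 2
          = ((∑ j ∈ Finset.univ.erase i, |B i j| * x i ^ 2)
            + ∑ j ∈ Finset.univ.erase i, |B i j| * x j ^ 2) / 2 := by
        intro i
        rw [← Finset.sum_add_distrib, Finset.sum_div]
      simp only [this]
      rw [← Finset.sum_div, Finset.sum_add_distrib, swap]
      ring
    have step3 : ∑ i, ∑ j ∈ Finset.univ.erase i, |B i j| * x i ^ 2
        ≤ ∑ i, B i i * x i ^ 2 := by
      refine Finset.sum_le_sum fun i _ => ?_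
      rw [← Finset.sum_mul]
      exact mul_le_mul_of_nonneg_right (hdd i) (sq_nonneg _)
    calc -(∑ i, B i i * x i ^ 2)
        ≤ -(∑ i, ∑ j ∈ Finset.univ.erase i, |B i j| * x i ^ 2) := by linarith
      _ = ∑ i, -(∑ j ∈ Finset.univ.erase i,
            (|B i j| * x i ^ 2 + |B i j| * x j ^ 2) / 2) := by
          rw [Finset.sum_neg_distrib, step2]
      _ ≤ _ := step1
  linarith

theorem scaled_dd_posSemidef {n : Type*} [Fintype n] [DecidableEq n]
    (A D : Matrix n n ℝ) (hAsymm : A.IsSymm)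
    (hDdiag : ∀ i j, i ≠ j → D i j = 0) (hDpos : ∀ i, 0 < D i i)
    (hdd : ∀ i, ∑ j ∈ Finset.univ.erase i, |(D * A * D) i j| ≤ (D * A * D) i i) :
    ∀ x : n → ℝ, 0 ≤ x ⬝ᵥ A.mulVec x := by
  intro x
  have hDsymm : Dᵀ = D := by
    ext i j
    by_cases h : i = j
    · simp [h]
    · simp [transpose_apply, hDdiag i j h, hDdiag j i (Ne.symm h)]
  have hBsymm : (D * A * D).IsSymm := by
    unfold Matrix.IsSymm
    rw [transpose_mul, transpose_mul, hDsymm, hAsymm.eq]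
    rw [Matrix.mul_assoc]
  set y : n → ℝ := fun i => x i / D i i with hy
  have hDy : D *ᵥ y = x := by
    funext i
    simp only [mulVec, dotProduct]
    rw [Finset.sum_eq_single i]
    · simp only [hy]; field_simp [(hDpos i).ne']
    · intro j _ hj; simp [hDdiag i j (Ne.symm hj)]
    · intro h; exact absurd (Finset.mem_univ i) h
  have key : y ⬝ᵥ (D * A * D) *ᵥ y = x ⬝ᵥ A *ᵥ x := by
    rw [Matrix.mul_assoc, ← mulVec_mulVec, dotProduct_mulVec, ← hDsymm,
      vecMul_transpose, hDy, ← mulVec_mulVec, hDsymm, hDy]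
  rw [← key]
  exact dd_psd (D * A * D) hBsymm hdd y
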